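/- arXiv:2208.03810 — 2 statements merged into one kernel-verified Lean document; each statement's English description precedes it below -/
import Mathlib

section
/- There is a constant c > 0 such that for every integer d ≥ 2, letting n = 2^d + d and letting f : {0,1}^n → {0,1} be the address function on n variables, there is a cost vector c' ∈ ℝ^n with all entries positive (namely cost 1/d on each of the d address bits and cost 1 on each of the 2^d dedicated bits) such that under the uniform distribution OPT_N(f, c') ≥ c · n · OPT_A(f, c'). -/
open Finset

/-- The set of tested indices `T` determines `f` on input `x`:
every input agreeing with `x` on `T` gives the same function value. -/
def Determines (n : ℕ) (f : (Fin n → Bool) → Bool) (T : Finset (Fin n))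
    (x : Fin n → Bool) : Prop :=
  ∀ x' : Fin n → Bool, (∀ i ∈ T, x' i = x i) → f x' = f x

/-- The set of indices tested by the non-adaptive strategy `π` in its first `k` tests. -/
def prefixSet (n : ℕ) (π : Equiv.Perm (Fin n)) (k : ℕ) : Finset (Fin n) :=
  Finset.univ.filter (fun i => (π.symm i).val < k)

/-- The number of tests performed by the non-adaptive strategy `π` on input `x`:
the least `k` such that the first `k` tested indices determine `f` on `x`. -/
noncomputable def naSteps (n : ℕ) (f : (Fin n → Bool) → Bool)
    (π : Equiv.Perm (Fin n)) (x : Fin n → Bool) : ℕ :=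
  sInf {k : ℕ | Determines n f (prefixSet n π k) x}

/-- The cost incurred by the non-adaptive strategy `π` on input `x`, with cost vector `c`. -/
noncomputable def naCost (n : ℕ) (f : (Fin n → Bool) → Bool) (c : Fin n → ℝ)
    (π : Equiv.Perm (Fin n)) (x : Fin n → Bool) : ℝ :=
  ∑ i ∈ prefixSet n π (naSteps n f π x), c i

/-- Probability of the outcome `x` under the product distribution with parameters `p`. -/
def prodWeight (n : ℕ) (p : Fin n → ℝ) (x : Fin n → Bool) : ℝ :=
  ∏ i : Fin n, if x i then p i else 1 - p i

/-- Expected cost of the non-adaptive strategy `π`. -/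
noncomputable def naExpCost (n : ℕ) (f : (Fin n → Bool) → Bool) (c : Fin n → ℝ)
    (p : Fin n → ℝ) (π : Equiv.Perm (Fin n)) : ℝ :=
  ∑ x : Fin n → Bool, prodWeight n p x * naCost n f c π x

/-- Optimal expected cost among non-adaptive strategies. -/
noncomputable def OPTN (n : ℕ) (f : (Fin n → Bool) → Bool) (c : Fin n → ℝ)
    (p : Fin n → ℝ) : ℝ :=
  sInf { r : ℝ | ∃ π : Equiv.Perm (Fin n), r = naExpCost n f c p π }

/-- Binary decision trees over `n` variables (adaptive strategies). -/
inductive DecTree (n : ℕ) : Type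
  | leaf : Bool → DecTree n
  | node : Fin n → DecTree n → DecTree n → DecTree n

/-- Evaluation of a decision tree on an input. -/
def DecTree.eval {n : ℕ} : DecTree n → (Fin n → Bool) → Bool
  | .leaf b, _ => b
  | .node i t0 t1, x => if x i then DecTree.eval t1 x else DecTree.eval t0 x

/-- Cost of a decision tree on input `x`: the sum of the costs of the indices
labeling the internal nodes on the root-to-leaf path followed on `x`. -/
def DecTree.costOn {n : ℕ} (c : Fin n → ℝ) : DecTree n → (Fin n → Bool) → ℝ
  | .leaf _, _ => 0
  | .node i t0 t1, x =>
      c i + (if x i then DecTree.costOn c t1 x else DecTree.costOn c t0 x)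

/-- The decision tree `t` computes the function `f`. -/
def DecTree.Computes {n : ℕ} (t : DecTree n) (f : (Fin n → Bool) → Bool) : Prop :=
  ∀ x, t.eval x = f x

/-- Expected cost of an adaptive strategy (decision tree). -/
noncomputable def adExpCost (n : ℕ) (c : Fin n → ℝ) (p : Fin n → ℝ)
    (t : DecTree n) : ℝ :=
  ∑ x : Fin n → Bool, prodWeight n p x * DecTree.costOn c t x

/-- Optimal expected cost among adaptive strategies computing `f`. -/
noncomputable def OPTA (n : ℕ) (f : (Fin n → Bool) → Bool) (c : Fin n → ℝ)
    (p : Fin n → ℝ) : ℝ :=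
  sInf { r : ℝ | ∃ t : DecTree n, DecTree.Computes t f ∧ r = adExpCost n c p t }

/-- `f` is the monotone read-once DNF whose terms are the (nonempty, pairwise disjoint)
sets of variables `T 0, …, T (m-1)`. -/
def IsReadOnceDNF (n m : ℕ) (T : Fin m → Finset (Fin n))
    (f : (Fin n → Bool) → Bool) : Prop :=
  (∀ j, (T j).Nonempty) ∧
  (∀ j k, j ≠ k → Disjoint (T j) (T k)) ∧
  (∀ x, f x = true ↔ ∃ j, ∀ i ∈ T j, x i = true)

/-- The value of variable `j` of `x : Fin (2^d + d) → Bool` (false for out-of-range `j`).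
Variables `0, …, d-1` are the address bits and variables `d, …, d + 2^d - 1` are the
dedicated bits. -/
def xAt (d : ℕ) (x : Fin (2 ^ d + d) → Bool) (j : ℕ) : Bool :=
  if h : j < 2 ^ d + d then x ⟨j, h⟩ else false

/-- The address encoded in binary by the `d` address bits of `x`. -/
def addrVal (d : ℕ) (x : Fin (2 ^ d + d) → Bool) : ℕ :=
  ∑ j ∈ Finset.range d, if xAt d x j then 2 ^ j else 0

/-- The address function on `n = 2^d + d` variables: it returns the dedicated bit
indexed by the address encoded by the `d` address bits. -/
def addressFn (d : ℕ) (x : Fin (2 ^ d + d) → Bool) : Bool :=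
  xAt d x (d + addrVal d x)

/- ###### auxiliary development ###### -/

lemma aux_sum_testBit (d a : ℕ) (ha : a < 2 ^ d) :
    (∑ j ∈ range d, if a.testBit j then 2 ^ j else 0) = a := by
  induction d generalizing a with
  | zero => interval_cases a; simp
  | succ d ih =>
    rw [Finset.sum_range_succ']
    have h2 : (∑ j ∈ range d, if a.testBit (j + 1) then 2 ^ (j + 1) else 0)
        = 2 * ∑ j ∈ range d, if (a / 2).testBit j then 2 ^ j else 0 := by
      rw [Finset.mul_sum]
      refine Finset.sum_congr rfl fun j _ => ?_
      rw [Nat.testBit_succ]; split <;> ring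
    have hd2 : a / 2 < 2 ^ d := by omega
    rw [h2, ih _ hd2, Nat.testBit_zero]
    rcases Nat.mod_two_eq_zero_or_one a with h | h <;> simp [h] <;> omega

lemma aux_testBit_sum (d : ℕ) (b : ℕ → Bool) (j : ℕ) (hj : j < d) :
    (∑ i ∈ range d, if b i then 2 ^ i else 0).testBit j = b j := by
  induction d generalizing b j with
  | zero => omega
  | succ d ih =>
    rw [Finset.sum_range_succ']
    have h2 : (∑ i ∈ range d, if b (i + 1) then 2 ^ (i + 1) else 0)
        = 2 * ∑ i ∈ range d, if b (i + 1) then 2 ^ i else 0 := by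
      rw [Finset.mul_sum]
      refine Finset.sum_congr rfl fun i _ => ?_
      split <;> ring
    rw [h2]
    set T := ∑ i ∈ range d, if b (i + 1) then 2 ^ i else 0 with hT
    cases j with
    | zero =>
      rw [Nat.testBit_zero]
      rcases hb : b 0 <;> simp [hb] <;> omega
    | succ j =>
      rw [Nat.testBit_succ]
      have : (2 * T + if b 0 then 2 ^ 0 else 0) / 2 = T := by split <;> omega
      rw [this]
      exact ih (fun i => b (i + 1)) j (by omega)

lemma aux_geom2 (d : ℕ) : ∑ j ∈ range d, 2 ^ j = 2 ^ d - 1 := by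
  induction d with
  | zero => simp
  | succ d ih => rw [Finset.sum_range_succ, ih]; have := Nat.one_le_two_pow (n := d); omega

lemma addrVal_lt (d : ℕ) (x : Fin (2 ^ d + d) → Bool) : addrVal d x < 2 ^ d := by
  have h1 : addrVal d x ≤ ∑ j ∈ range d, 2 ^ j :=
    Finset.sum_le_sum fun j _ => by split <;> simp
  have h2 := aux_geom2 d
  have h3 : (1:ℕ) ≤ 2 ^ d := Nat.one_le_two_pow
  omega

lemma addrVal_testBit (d : ℕ) (x : Fin (2 ^ d + d) → Bool) (j : ℕ) (hj : j < d) :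
    (addrVal d x).testBit j = xAt d x j := aux_testBit_sum d _ j hj

def fwdMap (d : ℕ) (x : Fin (2 ^ d + d) → Bool) : Fin (2 ^ d) → Bool :=
  fun i => x ⟨d + (i : ℕ), by have := i.isLt; omega⟩

def bwdMap (d a : ℕ) (y : Fin (2 ^ d) → Bool) : Fin (2 ^ d + d) → Bool :=
  fun i => if h : (i : ℕ) < d then a.testBit i
    else y ⟨(i : ℕ) - d, by have := i.isLt; omega⟩

lemma addrVal_bwd (d a : ℕ) (ha : a < 2 ^ d) (y : Fin (2 ^ d) → Bool) :
    addrVal d (bwdMap d a y) = a := by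
  unfold addrVal
  calc (∑ j ∈ range d, if xAt d (bwdMap d a y) j then 2 ^ j else 0)
      = ∑ j ∈ range d, if a.testBit j then 2 ^ j else 0 := by
        refine Finset.sum_congr rfl fun j hj => ?_
        have hj' := Finset.mem_range.mp hj
        have : xAt d (bwdMap d a y) j = a.testBit j := by
          unfold xAt bwdMap
          rw [dif_pos (by omega : j < 2 ^ d + d), dif_pos hj']
        rw [this]
    _ = a := aux_sum_testBit d a ha

lemma fwd_bwd (d a : ℕ) (y : Fin (2 ^ d) → Bool) : fwdMap d (bwdMap d a y) = y := by
  funext i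
  unfold fwdMap bwdMap
  rw [dif_neg (by omega : ¬ (d + (i : ℕ) < d))]
  exact congrArg y (Fin.ext (show d + (i:ℕ) - d = (i:ℕ) by omega))

lemma bwd_fwd (d a : ℕ) (x : Fin (2 ^ d + d) → Bool) (hx : addrVal d x = a) :
    bwdMap d a (fwdMap d x) = x := by
  funext i
  unfold fwdMap bwdMap
  by_cases h : (i : ℕ) < d
  · rw [dif_pos h]
    have h2 := addrVal_testBit d x i h
    rw [hx] at h2
    rw [h2]
    unfold xAt
    rw [dif_pos (by have := i.isLt; omega : (i:ℕ) < 2 ^ d + d)]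
  · rw [dif_neg h]
    exact congrArg x (Fin.ext (show d + ((i:ℕ) - d) = (i:ℕ) by omega))

lemma card_fiber (d : ℕ) (a : ℕ) (ha : a < 2 ^ d) :
    (Finset.univ.filter fun x : Fin (2 ^ d + d) → Bool => addrVal d x = a).card
      = 2 ^ (2 ^ d) := by
  have hc : (Finset.univ : Finset (Fin (2 ^ d) → Bool)).card = 2 ^ (2 ^ d) := by
    simp [Finset.card_univ]
  rw [← hc]
  refine Finset.card_bij' (fun x _ => fwdMap d x) (fun y _ => bwdMap d a y) ?_ ?_ ?_ ?_
  · intro x _; exact Finset.mem_univ _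
  · intro y _
    simp only [Finset.mem_filter, Finset.mem_univ, true_and]
    exact addrVal_bwd d a ha y
  · intro x hx
    simp only [Finset.mem_filter, Finset.mem_univ, true_and] at hx
    exact bwd_fwd d a x hx
  · intro y _
    exact fwd_bwd d a y

/- ## non-adaptive lower bound -/

lemma determines_naSteps (n : ℕ) (f : (Fin n → Bool) → Bool)
    (π : Equiv.Perm (Fin n)) (x : Fin n → Bool) :
    Determines n f (prefixSet n π (naSteps n f π x)) x := by
  have hne : {k : ℕ | Determines n f (prefixSet n π k) x}.Nonempty := by
    refine ⟨n, fun x' hx' => ?_⟩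
    have : x' = x := by
      funext i
      exact hx' i (by simp [prefixSet, (π.symm i).isLt])
    rw [this]
  exact Nat.sInf_mem hne

def dedIdx (d : ℕ) (π : Equiv.Perm (Fin (2 ^ d + d))) (a : ℕ) : ℕ :=
  if h : d + a < 2 ^ d + d then ((π.symm ⟨d + a, h⟩) : Fin (2 ^ d + d)).val else 0

def Gset (d : ℕ) (π : Equiv.Perm (Fin (2 ^ d + d))) (a : ℕ) : Finset (Fin (2 ^ d + d)) :=
  Finset.univ.filter (fun j => d ≤ (j : ℕ) ∧ ((π.symm j) : Fin (2 ^ d + d)).val ≤ dedIdx d π a)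

lemma ded_mem_of_determines (d : ℕ) (x : Fin (2 ^ d + d) → Bool)
    (T : Finset (Fin (2 ^ d + d))) (hT : Determines (2 ^ d + d) (addressFn d) T x) :
    (⟨d + addrVal d x, by have := addrVal_lt d x; omega⟩ : Fin (2 ^ d + d)) ∈ T := by
  by_contra hmem
  set a := addrVal d x with hadef
  have ha : a < 2 ^ d := addrVal_lt d x
  set ia : Fin (2 ^ d + d) := ⟨d + a, by omega⟩ with hia
  set x' : Fin (2 ^ d + d) → Bool := Function.update x ia (! (x ia)) with hx'
  have hagree : ∀ i ∈ T, x' i = x i := by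
    intro i hi
    have : i ≠ ia := fun h => hmem (h ▸ hi)
    simp [hx', Function.update_of_ne this]
  have haddr : addrVal d x' = addrVal d x := by
    unfold addrVal
    refine Finset.sum_congr rfl fun j hj => ?_
    have hj' := Finset.mem_range.mp hj
    have : xAt d x' j = xAt d x j := by
      unfold xAt
      rw [dif_pos (by omega : j < 2 ^ d + d)]
      rw [dif_pos (by omega : j < 2 ^ d + d)]
      apply Function.update_of_ne
      intro h
      have : j = d + a := congrArg Fin.val h
      omega
    rw [this]
  have heq := hT x' hagree
  have hxv : addressFn d x = x ia := by
    unfold addressFn xAt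
    rw [← hadef, dif_pos (by omega : d + a < 2 ^ d + d)]
  have hxv' : addressFn d x' = ! (x ia) := by
    unfold addressFn
    rw [haddr, ← hadef]
    unfold xAt
    rw [dif_pos (by omega : d + a < 2 ^ d + d)]
    show x' ia = _
    simp [hx']
  rw [hxv, hxv'] at heq
  simp at heq

noncomputable def cVec (d : ℕ) : Fin (2 ^ d + d) → ℝ :=
  fun i => if (i : ℕ) < d then 1 / (d : ℝ) else 1

lemma naCost_ge (d : ℕ) (hd : 1 ≤ d) (π : Equiv.Perm (Fin (2 ^ d + d)))
    (x : Fin (2 ^ d + d) → Bool) :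
    ((Gset d π (addrVal d x)).card : ℝ)
      ≤ naCost (2 ^ d + d) (addressFn d) (cVec d) π x := by
  set a := addrVal d x with hadef
  have ha : a < 2 ^ d := addrVal_lt d x
  set S := prefixSet (2 ^ d + d) π (naSteps (2 ^ d + d) (addressFn d) π x) with hS
  have hmem : (⟨d + a, by omega⟩ : Fin (2 ^ d + d)) ∈ S :=
    ded_mem_of_determines d x S (determines_naSteps _ _ π x)
  have hmem' : ((π.symm ⟨d + a, by omega⟩ : Fin (2 ^ d + d)) : ℕ)
      < naSteps (2 ^ d + d) (addressFn d) π x := by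
    have := (Finset.mem_filter.mp hmem).2
    exact this
  have hsub : Gset d π a ⊆ S := by
    intro j hj
    obtain ⟨-, hj1, hj2⟩ := Finset.mem_filter.mp hj
    refine Finset.mem_filter.mpr ⟨Finset.mem_univ _, ?_⟩
    have : dedIdx d π a = ((π.symm ⟨d + a, by omega⟩ : Fin (2 ^ d + d)) : ℕ) := by
      unfold dedIdx
      rw [dif_pos (by omega : d + a < 2 ^ d + d)]
    omega
  have h1 : ((Gset d π a).card : ℝ) = ∑ i ∈ Gset d π a, cVec d i := by
    rw [Finset.card_eq_sum_ones]
    push_cast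
    refine Finset.sum_congr rfl fun j hj => ?_
    obtain ⟨-, hj1, -⟩ := Finset.mem_filter.mp hj
    unfold cVec
    rw [if_neg (by omega)]
  rw [h1]
  unfold naCost
  refine Finset.sum_le_sum_of_subset_of_nonneg hsub fun i _ _ => ?_
  unfold cVec
  split
  · positivity
  · norm_num

lemma pair_count (s : Finset ℕ) (q : ℕ → ℕ) (hq : Set.InjOn q s) :
    s.card * s.card + s.card ≤ 2 * ∑ a ∈ s, (s.filter (fun b => q b ≤ q a)).card := by
  have hcf : ∀ a, (s.filter (fun b => q b ≤ q a)).card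
      = ∑ b ∈ s, if q b ≤ q a then 1 else 0 := fun a => by
    rw [Finset.card_filter]
  have key : ∑ a ∈ s, ∑ b ∈ s, ((if q b ≤ q a then 1 else 0) + (if q a ≤ q b then 1 else 0))
      ≥ ∑ a ∈ s, ∑ b ∈ s, (1 + if a = b then 1 else 0) := by
    refine Finset.sum_le_sum fun a haa => Finset.sum_le_sum fun b hbb => ?_
    by_cases hab : a = b
    · subst hab; simp
    · have : q a ≠ q b := fun h => hab (hq haa hbb h)
      rcases le_total (q b) (q a) with h | h
      · rw [if_pos h, if_neg hab, if_neg (by omega)]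
      · rw [if_pos h, if_neg hab]
        split <;> omega
  have hrhs : ∑ a ∈ s, ∑ b ∈ s, (1 + if a = b then 1 else 0)
      = s.card * s.card + s.card := by
    rw [Finset.sum_congr rfl (fun a ha => Finset.sum_add_distrib)]
    rw [Finset.sum_add_distrib]
    congr 1
    · simp [Finset.sum_const, smul_eq_mul, mul_comm]
    · rw [Finset.sum_congr rfl fun a ha => Finset.sum_ite_eq s a (fun _ => 1)]
      rw [Finset.sum_congr rfl fun a (ha : a ∈ s) => if_pos ha]
      simp
  have hlhs : ∑ a ∈ s, ∑ b ∈ s, ((if q b ≤ q a then 1 else 0) + (if q a ≤ q b then 1 else 0))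
      = 2 * ∑ a ∈ s, (s.filter (fun b => q b ≤ q a)).card := by
    rw [Finset.sum_congr rfl (fun a ha => Finset.sum_add_distrib)]
    rw [Finset.sum_add_distrib]
    have hswap : ∑ a ∈ s, ∑ b ∈ s, (if q a ≤ q b then 1 else 0)
        = ∑ a ∈ s, ∑ b ∈ s, (if q b ≤ q a then 1 else 0) := Finset.sum_comm
    rw [hswap, two_mul]
    congr 1 <;> exact (Finset.sum_congr rfl fun a _ => (hcf a)).symm
  omega

lemma Gset_card_ge (d : ℕ) (π : Equiv.Perm (Fin (2 ^ d + d))) (a : ℕ) :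
    ((range (2 ^ d)).filter (fun b => dedIdx d π b ≤ dedIdx d π a)).card
      ≤ (Gset d π a).card := by
  have hpos : 0 < 2 ^ d + d := by positivity
  refine Finset.card_le_card_of_injOn
    (fun b => if h : d + b < 2 ^ d + d then (⟨d + b, h⟩ : Fin (2 ^ d + d)) else ⟨0, hpos⟩)
    ?_ ?_
  · intro b hb
    obtain ⟨hb1, hb2⟩ := Finset.mem_filter.mp hb
    have hblt := Finset.mem_range.mp hb1
    have hlt : d + b < 2 ^ d + d := by omega
    beta_reduce
    rw [dif_pos hlt]
    refine Finset.mem_filter.mpr ⟨Finset.mem_univ _, by simp, ?_⟩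
    show ((π.symm ⟨d + b, hlt⟩ : Fin (2 ^ d + d)) : ℕ) ≤ dedIdx d π a
    have : dedIdx d π b = ((π.symm ⟨d + b, hlt⟩ : Fin (2 ^ d + d)) : ℕ) := by
      unfold dedIdx; rw [dif_pos hlt]
    omega
  · intro b hb b' hb' heq
    have hblt := Finset.mem_range.mp (Finset.mem_filter.mp (Finset.mem_coe.mp hb)).1
    have hblt' := Finset.mem_range.mp (Finset.mem_filter.mp (Finset.mem_coe.mp hb')).1
    beta_reduce at heq
    rw [dif_pos (by omega : d + b < 2 ^ d + d),
        dif_pos (by omega : d + b' < 2 ^ d + d)] at heq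
    have := congrArg Fin.val heq
    simpa using this

lemma dedIdx_injOn (d : ℕ) (π : Equiv.Perm (Fin (2 ^ d + d))) :
    Set.InjOn (dedIdx d π) (range (2 ^ d)) := by
  intro b hb b' hb' heq
  have hblt := Finset.mem_range.mp (Finset.mem_coe.mp hb)
  have hblt' := Finset.mem_range.mp (Finset.mem_coe.mp hb')
  unfold dedIdx at heq
  rw [dif_pos (by omega : d + b < 2 ^ d + d),
      dif_pos (by omega : d + b' < 2 ^ d + d)] at heq
  have h2 : π.symm ⟨d + b, by omega⟩ = π.symm ⟨d + b', by omega⟩ := Fin.ext heq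
  have h3 := π.symm.injective h2
  have h4 := congrArg Fin.val h3
  simpa using h4

lemma sum_G_ge (d : ℕ) (π : Equiv.Perm (Fin (2 ^ d + d))) :
    2 ^ d * 2 ^ d + 2 ^ d ≤ 2 * ∑ a ∈ range (2 ^ d), (Gset d π a).card := by
  have h1 := pair_count (range (2 ^ d)) (dedIdx d π) (dedIdx_injOn d π)
  rw [Finset.card_range] at h1
  have h2 : ∑ a ∈ range (2 ^ d), ((range (2 ^ d)).filter
        (fun b => dedIdx d π b ≤ dedIdx d π a)).card
      ≤ ∑ a ∈ range (2 ^ d), (Gset d π a).card :=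
    Finset.sum_le_sum fun a _ => Gset_card_ge d π a
  omega

lemma prodWeight_half (n : ℕ) (x : Fin n → Bool) :
    prodWeight n (fun _ => 1/2) x = (1/2 : ℝ) ^ n := by
  unfold prodWeight
  rw [Finset.prod_congr rfl (fun i _ => show (if x i then (1:ℝ)/2 else 1 - 1/2) = 1/2 by
    split <;> norm_num)]
  simp

lemma fiber_sum (d : ℕ) (π : Equiv.Perm (Fin (2 ^ d + d))) :
    ∑ x : Fin (2 ^ d + d) → Bool, (Gset d π (addrVal d x)).card
      = 2 ^ (2 ^ d) * ∑ a ∈ range (2 ^ d), (Gset d π a).card := by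
  rw [← Finset.sum_fiberwise_of_maps_to
    (fun x _ => Finset.mem_range.mpr (addrVal_lt d x))
    (fun x => (Gset d π (addrVal d x)).card)]
  rw [Finset.mul_sum]
  refine Finset.sum_congr rfl fun a ha => ?_
  have ha' := Finset.mem_range.mp ha
  rw [Finset.sum_congr rfl (fun x hx => by
    rw [(Finset.mem_filter.mp hx).2])]
  rw [Finset.sum_const, card_fiber d a ha', smul_eq_mul]

lemma nat_arith (d : ℕ) (hd : 2 ≤ d) :
    (2 ^ d + d) * 2 ^ (2 ^ d + d) ≤ 2 * (2 ^ (2 ^ d) * (2 ^ d * 2 ^ d + 2 ^ d)) := by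
  rw [pow_add]
  have hd2 : d ≤ 2 ^ d := (Nat.lt_two_pow_self (n := d)).le
  have hP : 0 < 2 ^ d := Nat.pow_pos (by norm_num)
  have hE : 0 < 2 ^ 2 ^ d := Nat.pow_pos (by norm_num)
  nlinarith [hd2, hP, hE, mul_pos hE hP]

lemma naExp_ge (d : ℕ) (hd : 2 ≤ d) (π : Equiv.Perm (Fin (2 ^ d + d))) :
    ((2 ^ d + d : ℕ) : ℝ) / 4
      ≤ naExpCost (2 ^ d + d) (addressFn d) (cVec d) (fun _ => 1/2) π := by
  have step1 : naExpCost (2 ^ d + d) (addressFn d) (cVec d) (fun _ => 1/2) π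
      = (1/2 : ℝ) ^ (2 ^ d + d)
        * ∑ x : Fin (2 ^ d + d) → Bool, naCost (2 ^ d + d) (addressFn d) (cVec d) π x := by
    unfold naExpCost
    rw [Finset.mul_sum]
    exact Finset.sum_congr rfl fun x _ => by rw [prodWeight_half]
  have step2 : ((∑ x : Fin (2 ^ d + d) → Bool, (Gset d π (addrVal d x)).card : ℕ) : ℝ)
      ≤ ∑ x : Fin (2 ^ d + d) → Bool, naCost (2 ^ d + d) (addressFn d) (cVec d) π x := by
    push_cast
    exact Finset.sum_le_sum fun x _ => naCost_ge d (by omega) π x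
  have step3 : (2 ^ d + d) * 2 ^ (2 ^ d + d)
      ≤ 4 * ∑ x : Fin (2 ^ d + d) → Bool, (Gset d π (addrVal d x)).card := by
    have h1 := sum_G_ge d π
    have h2 := fiber_sum d π
    have h3 := nat_arith d hd
    have h5 : 2 ^ (2 ^ d) * (2 ^ d * 2 ^ d + 2 ^ d)
        ≤ 2 ^ (2 ^ d) * (2 * ∑ a ∈ range (2 ^ d), (Gset d π a).card) :=
      Nat.mul_le_mul_left _ h1
    have hmul : 2 ^ (2 ^ d) * (2 * ∑ a ∈ range (2 ^ d), (Gset d π a).card)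
        = 2 * (2 ^ (2 ^ d) * ∑ a ∈ range (2 ^ d), (Gset d π a).card) := by ring
    omega
  rw [step1]
  have hcast : ((2 ^ d + d : ℕ) : ℝ) * 2 ^ (2 ^ d + d)
      ≤ 4 * ((∑ x : Fin (2 ^ d + d) → Bool, (Gset d π (addrVal d x)).card : ℕ) : ℝ) := by
    exact_mod_cast step3
  have h2N : (0:ℝ) < 2 ^ (2 ^ d + d) := by positivity
  have key : ((2 ^ d + d : ℕ) : ℝ) / 4 ≤ (1/2 : ℝ) ^ (2 ^ d + d)
      * ((∑ x : Fin (2 ^ d + d) → Bool, (Gset d π (addrVal d x)).card : ℕ) : ℝ) := by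
    rw [show ((1:ℝ)/2) ^ (2 ^ d + d)
        * ((∑ x : Fin (2 ^ d + d) → Bool, (Gset d π (addrVal d x)).card : ℕ) : ℝ)
        = ((∑ x : Fin (2 ^ d + d) → Bool, (Gset d π (addrVal d x)).card : ℕ) : ℝ)
          / 2 ^ (2 ^ d + d) by rw [div_pow, one_pow]; ring]
    rw [div_le_div_iff₀ (by norm_num) h2N]
    linarith
  exact key.trans (mul_le_mul_of_nonneg_left step2 (by positivity))

lemma OPTN_ge (d : ℕ) (hd : 2 ≤ d) :
    ((2 ^ d + d : ℕ) : ℝ) / 4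
      ≤ OPTN (2 ^ d + d) (addressFn d) (cVec d) (fun _ => 1/2) := by
  apply le_csInf
  · exact ⟨_, ⟨Equiv.refl _, rfl⟩⟩
  · rintro r ⟨π, rfl⟩
    exact naExp_ge d hd π

def aTree (d : ℕ) : ℕ → ℕ → ℕ → DecTree (2 ^ d + d)
  | 0, _, acc =>
      if h : d + acc < 2 ^ d + d then
        DecTree.node ⟨d + acc, h⟩ (DecTree.leaf false) (DecTree.leaf true)
      else DecTree.leaf false
  | fuel + 1, k, acc =>
      if h : k < 2 ^ d + d then
        DecTree.node ⟨k, h⟩ (aTree d fuel (k + 1) acc) (aTree d fuel (k + 1) (acc + 2 ^ k))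
      else DecTree.leaf false

lemma pow_succ_aux (k : ℕ) : 2 ^ k + 2 ^ k = 2 ^ (k + 1) := by rw [pow_succ]; omega

lemma aTree_eval (d : ℕ) (fuel k acc : ℕ) (x : Fin (2 ^ d + d) → Bool)
    (hk : k + fuel = d) (hacc : acc < 2 ^ k)
    (hacc2 : acc = ∑ j ∈ range k, if xAt d x j then 2 ^ j else 0) :
    (aTree d fuel k acc).eval x = addressFn d x := by
  induction fuel generalizing k acc with
  | zero =>
    have hkd : k = d := by omega
    rw [hkd] at hacc hacc2
    have hlt : d + acc < 2 ^ d + d := by omega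
    have hav : addrVal d x = acc := by unfold addrVal; rw [hacc2]
    unfold aTree
    rw [dif_pos hlt]
    unfold addressFn
    rw [hav]
    unfold xAt
    rw [dif_pos hlt]
    show (if x ⟨d + acc, hlt⟩ then (DecTree.leaf true).eval x
      else (DecTree.leaf false).eval x) = x ⟨d + acc, hlt⟩
    cases x ⟨d + acc, hlt⟩ <;> rfl
  | succ fuel ih =>
    have hdd : d ≤ 2 ^ d + d := Nat.le_add_left d (2 ^ d)
    have hlt : k < 2 ^ d + d := by omega
    have hps := pow_succ_aux k
    unfold aTree
    rw [dif_pos hlt]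
    show (if x ⟨k, hlt⟩ then (aTree d fuel (k+1) (acc + 2 ^ k)).eval x
      else (aTree d fuel (k+1) acc).eval x) = addressFn d x
    have hxk : xAt d x k = x ⟨k, hlt⟩ := by unfold xAt; rw [dif_pos hlt]
    cases hx : x ⟨k, hlt⟩
    · rw [if_neg (by simp)]
      refine ih (k+1) acc (by omega) (by omega) ?_
      rw [Finset.sum_range_succ, ← hacc2, hxk, hx]
      simp
    · rw [if_pos rfl]
      refine ih (k+1) (acc + 2 ^ k) (by omega) (by omega) ?_
      rw [Finset.sum_range_succ, ← hacc2, hxk, hx]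
      simp

lemma aTree_cost (d : ℕ) (hd : 1 ≤ d) (fuel k acc : ℕ) (x : Fin (2 ^ d + d) → Bool)
    (hk : k + fuel = d) (hacc : acc < 2 ^ k) :
    (aTree d fuel k acc).costOn (cVec d) x = fuel * (1 / (d:ℝ)) + 1 := by
  induction fuel generalizing k acc with
  | zero =>
    have hkd : k = d := by omega
    rw [hkd] at hacc
    have hlt : d + acc < 2 ^ d + d := by omega
    unfold aTree
    rw [dif_pos hlt]
    show cVec d ⟨d + acc, hlt⟩ + (if x ⟨d + acc, hlt⟩ then (DecTree.leaf true).costOn (cVec d) x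
      else (DecTree.leaf false).costOn (cVec d) x) = ((0:ℕ):ℝ) * (1/(d:ℝ)) + 1
    have hc : cVec d ⟨d + acc, hlt⟩ = 1 := by
      unfold cVec
      rw [if_neg (by simp)]
    rw [hc]
    cases x ⟨d + acc, hlt⟩ <;> simp [DecTree.costOn]
  | succ fuel ih =>
    have hdd : d ≤ 2 ^ d + d := Nat.le_add_left d (2 ^ d)
    have hlt : k < 2 ^ d + d := by omega
    have hps := pow_succ_aux k
    unfold aTree
    rw [dif_pos hlt]
    show cVec d ⟨k, hlt⟩ + (if x ⟨k, hlt⟩ then (aTree d fuel (k+1) (acc + 2^k)).costOn (cVec d) x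
      else (aTree d fuel (k+1) acc).costOn (cVec d) x) = ((fuel + 1 : ℕ) : ℝ) * (1/(d:ℝ)) + 1
    have hc : cVec d ⟨k, hlt⟩ = 1 / (d:ℝ) := by
      unfold cVec
      rw [if_pos (by simp; omega)]
    have h0 : (aTree d fuel (k+1) acc).costOn (cVec d) x = fuel * (1/(d:ℝ)) + 1 :=
      ih (k+1) acc (by omega) (by omega)
    have h1 : (aTree d fuel (k+1) (acc + 2^k)).costOn (cVec d) x = fuel * (1/(d:ℝ)) + 1 :=
      ih (k+1) (acc + 2^k) (by omega) (by omega)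
    rw [hc, h0, h1]
    push_cast
    cases x ⟨k, hlt⟩ <;> simp <;> ring

lemma costOn_nonneg {n : ℕ} (c : Fin n → ℝ) (hc : ∀ i, 0 ≤ c i) (t : DecTree n)
    (x : Fin n → Bool) : 0 ≤ t.costOn c x := by
  induction t with
  | leaf b => simp [DecTree.costOn]
  | node i t0 t1 ih0 ih1 =>
    show 0 ≤ c i + (if x i then t1.costOn c x else t0.costOn c x)
    have h1 : 0 ≤ (if x i then t1.costOn c x else t0.costOn c x) := by
      split <;> assumption
    have := hc i
    linarith

lemma OPTA_le (d : ℕ) (hd : 2 ≤ d) :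
    OPTA (2 ^ d + d) (addressFn d) (cVec d) (fun _ => 1/2) ≤ 2 := by
  have hdR : (0:ℝ) < d := by positivity
  have hcomp : (aTree d d 0 0).Computes (addressFn d) := by
    intro x
    exact aTree_eval d d 0 0 x (by omega) (by norm_num) (by simp)
  have hcost : adExpCost (2 ^ d + d) (cVec d) (fun _ => 1/2) (aTree d d 0 0) = 2 := by
    unfold adExpCost
    have hterm : ∀ x : Fin (2 ^ d + d) → Bool,
        prodWeight (2 ^ d + d) (fun _ => 1/2) x * (aTree d d 0 0).costOn (cVec d) x
        = (1/2 : ℝ) ^ (2 ^ d + d) * 2 := by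
      intro x
      rw [prodWeight_half, aTree_cost d (by omega) d 0 0 x (by omega) (by norm_num)]
      rw [mul_one_div, div_self (ne_of_gt hdR)]
      norm_num
    rw [Finset.sum_congr rfl fun x _ => hterm x, Finset.sum_const]
    have hcard : (Finset.univ : Finset (Fin (2 ^ d + d) → Bool)).card = 2 ^ (2 ^ d + d) := by
      simp [Finset.card_univ]
    rw [hcard, nsmul_eq_mul]
    push_cast
    rw [show ((1:ℝ)/2) ^ (2 ^ d + d) = ((2:ℝ) ^ (2 ^ d + d))⁻¹ by
      rw [div_pow, one_pow, one_div]]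
    have hne : ((2:ℝ) ^ (2 ^ d + d)) ≠ 0 := by positivity
    field_simp
  have hbdd : BddBelow { r : ℝ | ∃ t : DecTree (2 ^ d + d),
      DecTree.Computes t (addressFn d) ∧ r = adExpCost (2 ^ d + d) (cVec d) (fun _ => 1/2) t } := by
    refine ⟨0, ?_⟩
    rintro r ⟨t, -, rfl⟩
    unfold adExpCost
    apply Finset.sum_nonneg
    intro x _
    apply mul_nonneg
    · rw [prodWeight_half]; positivity
    · apply costOn_nonneg
      intro i
      unfold cVec
      split
      · positivity
      · norm_num
  have hmem : (2:ℝ) ∈ { r : ℝ | ∃ t : DecTree (2 ^ d + d),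
      DecTree.Computes t (addressFn d) ∧ r = adExpCost (2 ^ d + d) (cVec d) (fun _ => 1/2) t } :=
    ⟨aTree d d 0 0, hcomp, hcost.symm⟩
  exact csInf_le hbdd hmem

/-- There is a constant `c > 0` such that for every `d ≥ 2`, with `n = 2^d + d` and `f`
the address function on `n` variables, there is a positive cost vector — namely cost
`1/d` on each of the `d` address bits and cost `1` on each of the `2^d` dedicated bits —
such that under the uniform distribution `OPT_N(f, c') ≥ c·n·OPT_A(f, c')`. -/
theorem stmt14 :
    ∃ c : ℝ, 0 < c ∧
      ∀ d : ℕ, 2 ≤ d →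
        ∃ c' : Fin (2 ^ d + d) → ℝ,
          (∀ i, 0 < c' i) ∧
          (∀ i : Fin (2 ^ d + d), c' i = if (i : ℕ) < d then 1 / (d : ℝ) else 1) ∧
          c * ((2 ^ d + d : ℕ) : ℝ) *
              OPTA (2 ^ d + d) (addressFn d) c' (fun _ => 1/2) ≤
            OPTN (2 ^ d + d) (addressFn d) c' (fun _ => 1/2) := by
  refine ⟨1/8, by norm_num, fun d hd => ⟨cVec d, ?_, fun i => rfl, ?_⟩⟩
  · intro i
    unfold cVec
    have hd0 : (0:ℝ) < (d:ℝ) := by exact_mod_cast (by omega : 0 < d)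
    split
    · positivity
    · norm_num
  · have hA := OPTA_le d hd
    have hN := OPTN_ge d hd
    calc (1/8 : ℝ) * ((2 ^ d + d : ℕ) : ℝ)
          * OPTA (2 ^ d + d) (addressFn d) (cVec d) (fun _ => 1/2)
        ≤ 1/8 * ((2 ^ d + d : ℕ) : ℝ) * 2 := by
          apply mul_le_mul_of_nonneg_left hA (by positivity)
      _ = ((2 ^ d + d : ℕ) : ℝ) / 4 := by ring
      _ ≤ OPTN (2 ^ d + d) (addressFn d) (cVec d) (fun _ => 1/2) := hN
end

section
/- Let n ≥ 2 and let f : {0,1}^n → {0,1} be a monotone read-once DNF with m terms in which every term contains more than 2·log₂(n) variables. Under unit costs and the uniform distribution: (i) there is a non-adaptive strategy with expected cost at most 3·m·log₂(n); (ii) OPT_A(f) ≥ m/2; consequently OPT_N(f) ≤ 6·log₂(n) · OPT_A(f). -/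
open Finset

namespace SBFE

/-! ### List helpers -/

variable {α : Type*}

lemma mem_take_iff_indexOf [DecidableEq α] {l : List α} {i : α} (h : i ∈ l) :
    ∀ {k : ℕ}, i ∈ l.take k ↔ List.idxOf i l < k := by
  induction l with
  | nil => simp at h
  | cons a l ih =>
    intro k
    cases k with
    | zero => simp
    | succ k =>
      by_cases hia : i = a
      · subst hia
        simp [List.take_succ_cons, List.idxOf_cons_self]
      · have h' : i ∈ l := by
          rcases List.mem_cons.mp h with h1 | h1
          · exact absurd h1 hia
          · exact h1
        rw [List.take_succ_cons, List.idxOf_cons_ne _ (Ne.symm hia)]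
        simp only [List.mem_cons, hia, false_or]
        rw [ih h']
        omega

lemma takeWhile_all {p : α → Bool} {l : List α} (h : ∀ a ∈ l, p a = true) :
    l.takeWhile p = l := by
  induction l with
  | nil => rfl
  | cons a l ih =>
    rw [List.takeWhile_cons_of_pos (h a List.mem_cons_self)]
    rw [ih (fun b hb => h b (List.mem_cons_of_mem a hb))]

lemma exists_false_in_take {p : α → Bool} {l : List α} (h : ∃ a ∈ l, p a = false) :
    (l.takeWhile p).length < l.length ∧
      ∃ e ∈ l.take ((l.takeWhile p).length + 1), p e = false := by
  induction l with
  | nil => simp at h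
  | cons a l ih =>
    by_cases hpa : p a
    · rcases h with ⟨b, hb, hpb⟩
      have hb' : b ∈ l := by
        rcases List.mem_cons.mp hb with rfl | h1
        · rw [hpa] at hpb; exact absurd hpb (by simp)
        · exact h1
      obtain ⟨h1, e, he, hpe⟩ := ih ⟨b, hb', hpb⟩
      rw [List.takeWhile_cons_of_pos hpa]
      refine ⟨by simpa using h1, e, ?_, hpe⟩
      simp only [List.length_cons, List.take_succ_cons]
      exact List.mem_cons_of_mem a he
    · rw [List.takeWhile_cons_of_neg hpa]
      refine ⟨by simp, a, ?_, by simpa using hpa⟩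
      simp [List.take_succ_cons]

lemma sat_of_mem_take {p : α → Bool} {l : List α} {t : ℕ}
    (ht : t ≤ (l.takeWhile p).length) {i : α} (hi : i ∈ l.take t) : p i = true := by
  induction l generalizing t with
  | nil => simp at hi
  | cons a l ih =>
    cases t with
    | zero => simp at hi
    | succ t =>
      by_cases hpa : p a
      · rw [List.takeWhile_cons_of_pos hpa, List.length_cons] at ht
        rw [List.take_succ_cons] at hi
        rcases List.mem_cons.mp hi with rfl | hi
        · exact hpa
        · exact ih (Nat.succ_le_succ_iff.mp ht) hi
      · rw [List.takeWhile_cons_of_neg hpa] at ht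
        simp at ht

/-! ### Counting / probability helpers -/

lemma sum_ind_allones (n : ℕ) (S : Finset (Fin n)) :
    ∑ x : Fin n → Bool, (if ∀ i ∈ S, x i = true then ((1:ℝ)/2)^n else 0)
      = (1/2) ^ S.card := by
  have h1 : ∀ x : Fin n → Bool,
      (if ∀ i ∈ S, x i = true then ((1:ℝ)) else 0)
        = ∏ i : Fin n, (if i ∈ S then (if x i then (1:ℝ) else 0) else 1) := by
    intro x
    rw [Finset.prod_ite_mem, Finset.univ_inter, Finset.prod_boole]
    simp
  have h2 : ∑ x : Fin n → Bool, ∏ i : Fin n,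
      (if i ∈ S then (if x i then (1:ℝ) else 0) else 1)
      = ∏ i : Fin n, (if i ∈ S then (1:ℝ) else 2) := by
    rw [← Fintype.prod_sum (fun (i : Fin n) (b : Bool) =>
      (if i ∈ S then (if b then (1:ℝ) else 0) else 1))]
    refine Finset.prod_congr rfl fun i _ => ?_
    rw [Fintype.sum_bool]
    by_cases h : i ∈ S <;> simp [h] <;> norm_num
  have h3 : ∏ i : Fin n, (if i ∈ S then (1:ℝ) else 2) = 2 ^ (n - S.card) := by
    rw [Finset.prod_ite]
    simp only [Finset.prod_const_one, Finset.prod_const, one_mul]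
    congr 1
    have : Finset.univ.filter (fun i => i ∉ S) = Sᶜ := by
      ext i; simp
    rw [this, Finset.card_compl]
    simp
  have hc : S.card ≤ n := by simpa using Finset.card_le_card (Finset.subset_univ S)
  have key : ∑ x : Fin n → Bool, (if ∀ i ∈ S, x i = true then ((1:ℝ)/2)^n else 0)
      = ((1:ℝ)/2)^n * ∑ x : Fin n → Bool, (if ∀ i ∈ S, x i = true then (1:ℝ) else 0) := by
    rw [Finset.mul_sum]
    refine Finset.sum_congr rfl fun x _ => ?_
    by_cases h : ∀ i ∈ S, x i = true <;> simp [h]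
  rw [key]
  simp only [h1]
  rw [h2, h3]
  have hn : n = (n - S.card) + S.card := by omega
  rw [show ((1:ℝ)/2)^n = ((1:ℝ)/2)^(n-S.card) * ((1:ℝ)/2)^S.card by
    rw [← pow_add, ← hn]]
  rw [mul_comm (((1:ℝ)/2)^(n-S.card)) _, mul_assoc, ← mul_pow]
  norm_num

lemma sum_weight_one (n : ℕ) : ∑ _x : Fin n → Bool, ((1:ℝ)/2)^n = 1 := by
  rw [Finset.sum_const, Finset.card_univ]
  have h : Fintype.card (Fin n → Bool) = 2 ^ n := by
    rw [Fintype.card_fun]; simp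
  rw [h]
  simp [nsmul_eq_mul, ← mul_pow]

lemma prodWeight_half (n : ℕ) (x : Fin n → Bool) :
    prodWeight n (fun _ => 1/2) x = ((1:ℝ)/2)^n := by
  unfold prodWeight
  have h : ∀ i : Fin n, (if x i then (1:ℝ)/2 else 1 - 1/2) = 1/2 := by
    intro i; norm_num
  simp only [h, Finset.prod_const, Finset.card_univ, Fintype.card_fin]

/-! ### Decision tree helpers -/

def pathSet {n : ℕ} : DecTree n → (Fin n → Bool) → Finset (Fin n)
  | .leaf _, _ => ∅
  | .node i t0 t1, x => insert i (if x i then pathSet t1 x else pathSet t0 x)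

lemma costOn_nonneg {n : ℕ} (t : DecTree n) (x : Fin n → Bool) :
    0 ≤ t.costOn (fun _ => 1) x := by
  induction t with
  | leaf b => simp [DecTree.costOn]
  | node i t0 t1 ih0 ih1 =>
    simp only [DecTree.costOn]
    by_cases h : x i <;> simp [h] <;> linarith

lemma card_pathSet_le_costOn {n : ℕ} (t : DecTree n) (x : Fin n → Bool) :
    ((pathSet t x).card : ℝ) ≤ t.costOn (fun _ => 1) x := by
  induction t with
  | leaf b => simp [DecTree.costOn, pathSet]
  | node i t0 t1 ih0 ih1 =>
    simp only [DecTree.costOn, pathSet]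
    by_cases h : x i <;> simp only [h, if_true, if_false, Bool.false_eq_true]
    · have h1 := Finset.card_insert_le i (pathSet t1 x)
      have h2 : ((insert i (pathSet t1 x)).card : ℝ) ≤ (pathSet t1 x).card + 1 := by
        exact_mod_cast h1
      linarith
    · have h1 := Finset.card_insert_le i (pathSet t0 x)
      have h2 : ((insert i (pathSet t0 x)).card : ℝ) ≤ (pathSet t0 x).card + 1 := by
        exact_mod_cast h1
      linarith

lemma eval_agree {n : ℕ} (t : DecTree n) (x x' : Fin n → Bool)
    (h : ∀ i ∈ pathSet t x, x' i = x i) : t.eval x' = t.eval x := by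
  induction t with
  | leaf b => rfl
  | node i t0 t1 ih0 ih1 =>
    have hi : x' i = x i := h i (by simp [pathSet])
    simp only [DecTree.eval, hi]
    by_cases hx : x i
    · simp only [hx, if_true]
      exact ih1 fun j hj => h j (by simp [pathSet, hx]; right; exact hj)
    · simp only [hx, if_false]
      exact ih0 fun j hj => h j (by simp [pathSet, hx]; right; exact hj)

def treeOfFun {n : ℕ} : List (Fin n) → ((Fin n → Bool) → Bool) → DecTree n
  | [], g => .leaf (g fun _ => false)
  | i :: l, g => .node i (treeOfFun l fun y => g (Function.update y i false))
      (treeOfFun l fun y => g (Function.update y i true))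

lemma eval_treeOfFun {n : ℕ} (l : List (Fin n)) (g : (Fin n → Bool) → Bool)
    (x : Fin n → Bool) :
    (treeOfFun l g).eval x = g (fun i => if i ∈ l then x i else false) := by
  induction l generalizing g with
  | nil => simp [treeOfFun, DecTree.eval]
  | cons a l ih =>
    simp only [treeOfFun, DecTree.eval]
    by_cases h : x a
    · rw [if_pos h, ih]
      congr 1
      funext k
      rw [Function.update_apply]
      by_cases hk : k = a
      · subst hk; simp [h]
      · simp [hk, List.mem_cons]
    · rw [if_neg h, ih]
      congr 1
      funext k
      rw [Function.update_apply]
      by_cases hk : k = a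
      · subst hk; simp [h]
      · simp [hk, List.mem_cons]

lemma treeOfFun_computes {n : ℕ} (f : (Fin n → Bool) → Bool) :
    DecTree.Computes (treeOfFun (List.finRange n) f) f := by
  intro x
  rw [eval_treeOfFun]
  congr 1
  funext i
  simp [List.mem_finRange]

end SBFE

namespace SBFE

section Construction

variable {n m : ℕ}

def ell (T : Fin m → Finset (Fin n)) (j : Fin m) : List (Fin n) :=
  (T j).sort (· ≤ ·)

lemma length_ell (T : Fin m → Finset (Fin n)) (j : Fin m) :
    (ell T j).length = (T j).card := Finset.length_sort _

lemma nodup_ell (T : Fin m → Finset (Fin n)) (j : Fin m) :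
    (ell T j).Nodup := Finset.sort_nodup _ _

lemma mem_ell {T : Fin m → Finset (Fin n)} {j : Fin m} {i : Fin n} :
    i ∈ ell T j ↔ i ∈ T j := Finset.mem_sort _

def dep (T : Fin m → Finset (Fin n)) (x : Fin n → Bool) (j : Fin m) : ℕ :=
  min (((ell T j).takeWhile (fun i => x i)).length + 1) (T j).card

def Dmax (T : Fin m → Finset (Fin n)) (x : Fin n → Bool) : ℕ :=
  Finset.univ.sup (dep T x)

def Kval (T : Fin m → Finset (Fin n)) (x : Fin n → Bool) : ℕ :=
  ∑ j : Fin m, min (Dmax T x) (T j).card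

def target (T : Fin m → Finset (Fin n)) (x : Fin n → Bool) : Finset (Fin n) :=
  Finset.univ.biUnion fun j => ((ell T j).take (min (Dmax T x) (T j).card)).toFinset

noncomputable def keyf (T : Fin m → Finset (Fin n)) : Fin n → ℕ := fun i =>
  if h : ∃ j, i ∈ T j then ((ell T h.choose).idxOf i) * (n + m) + (h.choose).val
  else n * (n + m) + i.val

noncomputable def sortPerm (T : Fin m → Finset (Fin n)) : Equiv.Perm (Fin n) :=
  Tuple.sort (keyf T)

variable {T : Fin m → Finset (Fin n)}

lemma card_le_n (j : Fin m) : (T j).card ≤ n := by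
  simpa using Finset.card_le_card (Finset.subset_univ (T j))

lemma dep_le_card (x : Fin n → Bool) (j : Fin m) : dep T x j ≤ (T j).card :=
  min_le_right _ _

lemma dep_le_Dmax (x : Fin n → Bool) (j : Fin m) : dep T x j ≤ Dmax T x :=
  Finset.le_sup (Finset.mem_univ j)

lemma Dmax_le_n (x : Fin n → Bool) : Dmax T x ≤ n :=
  Finset.sup_le fun j _ => (dep_le_card x j).trans (card_le_n j)

lemma take_toFinset_subset (x : Fin n → Bool) (j : Fin m) :
    ((ell T j).take (min (Dmax T x) (T j).card)).toFinset ⊆ T j := by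
  intro i hi
  exact mem_ell.mp (List.take_subset _ _ (List.mem_toFinset.mp hi))

lemma card_target (hdisj : ∀ j k, j ≠ k → Disjoint (T j) (T k)) (x : Fin n → Bool) :
    (target T x).card = Kval T x := by
  rw [target, Finset.card_biUnion]
  · refine Finset.sum_congr rfl fun j _ => ?_
    rw [List.toFinset_card_of_nodup ((List.take_sublist _ _).nodup (nodup_ell T j))]
    rw [List.length_take, length_ell]
    exact min_eq_left (min_le_right _ _)
  · intro a _ b _ hab
    exact Finset.disjoint_of_subset_left (take_toFinset_subset x a)
      (Finset.disjoint_of_subset_right (take_toFinset_subset x b) (hdisj a b hab))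

lemma kval_le_n (hdisj : ∀ j k, j ≠ k → Disjoint (T j) (T k)) (x : Fin n → Bool) :
    Kval T x ≤ n := by
  rw [← card_target hdisj x]
  simpa using Finset.card_le_card (Finset.subset_univ (target T x))

lemma det_target {f : (Fin n → Bool) → Bool} (hf : IsReadOnceDNF n m T f)
    (x : Fin n → Bool) : Determines n f (target T x) x := by
  intro x' hx'
  have hkey : ∀ j : Fin m, (∀ i ∈ T j, x' i = true) ↔ (∀ i ∈ T j, x i = true) := by
    intro j
    by_cases hall : ∀ i ∈ T j, x i = true
    · have htw : ((ell T j).takeWhile (fun i => x i)).length = (T j).card := by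
        rw [takeWhile_all (fun a ha => hall a (mem_ell.mp ha)), length_ell]
      have hdep : dep T x j = (T j).card := by
        rw [dep, htw]; omega
      have hmin : min (Dmax T x) (T j).card = (T j).card := by
        have h := dep_le_Dmax (T := T) x j
        rw [hdep] at h
        omega
      have hsub : T j ⊆ target T x := by
        intro i hi
        refine Finset.mem_biUnion.mpr ⟨j, Finset.mem_univ j, ?_⟩
        rw [hmin]
        rw [List.mem_toFinset]
        have : (ell T j).take (T j).card = ell T j := by
          apply List.take_of_length_le
          rw [length_ell]
        rw [this]
        exact mem_ell.mpr hi
      constructor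
      · intro _; exact hall
      · intro _ i hi
        rw [hx' i (hsub hi)]
        exact hall i hi
    · push_neg at hall
      obtain ⟨i0, hi0, hxi0⟩ := hall
      have hxi0' : x i0 = false := by
        cases h : x i0
        · rfl
        · exact absurd h hxi0
      obtain ⟨hlt, e, he, hpe⟩ := exists_false_in_take
        (p := fun i => x i) (l := ell T j) ⟨i0, mem_ell.mpr hi0, hxi0'⟩
      set tw := ((ell T j).takeWhile (fun i => x i)).length with htw
      have hdep : dep T x j = tw + 1 := by
        rw [dep, ← htw]
        rw [length_ell] at hlt
        omega
      have hel : e ∈ ell T j := List.take_subset _ _ he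
      have hidx : List.idxOf e (ell T j) < min (Dmax T x) (T j).card := by
        have h1 : List.idxOf e (ell T j) < tw + 1 :=
          (mem_take_iff_indexOf hel).mp he
        have h2 : tw + 1 ≤ Dmax T x := hdep ▸ dep_le_Dmax (T := T) x j
        have h3 : tw + 1 ≤ (T j).card := hdep ▸ dep_le_card (T := T) x j
        omega
      have het : e ∈ target T x := by
        refine Finset.mem_biUnion.mpr ⟨j, Finset.mem_univ j, ?_⟩
        rw [List.mem_toFinset]
        exact (mem_take_iff_indexOf hel).mpr hidx
      constructor
      · intro hall'
        exfalso
        have := hall' e (mem_ell.mp hel)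
        rw [hx' e het, hpe] at this
        exact absurd this (by simp)
      · intro hall'
        exfalso
        have := hall' e (mem_ell.mp hel)
        rw [hpe] at this
        exact absurd this (by simp)
  have hiff : (f x' = true) ↔ (f x = true) := by
    rw [hf.2.2, hf.2.2]
    exact exists_congr hkey
  cases hx : f x
  · cases hx' : f x'
    · rfl
    · rw [hx] at hiff; rw [hx'] at hiff; simpa using hiff.mp rfl
  · cases hx' : f x'
    · rw [hx] at hiff; rw [hx'] at hiff; simpa using hiff.mpr rfl
    · rfl

lemma key_eq_of_mem (hdisj : ∀ j k, j ≠ k → Disjoint (T j) (T k))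
    {i : Fin n} {j : Fin m} (hij : i ∈ T j) :
    keyf T i = (ell T j).idxOf i * (n + m) + j.val := by
  have h : ∃ j', i ∈ T j' := ⟨j, hij⟩
  rw [keyf, dif_pos h]
  have hch : h.choose = j := by
    by_contra hne
    exact Finset.disjoint_left.mp (hdisj _ _ hne) h.choose_spec hij
  rw [hch]

lemma key_lt_of_target (hdisj : ∀ j k, j ≠ k → Disjoint (T j) (T k))
    {x : Fin n → Bool} {i : Fin n} (hi : i ∈ target T x) :
    keyf T i < Dmax T x * (n + m) := by
  obtain ⟨j, _, hij⟩ := Finset.mem_biUnion.mp hi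
  rw [List.mem_toFinset] at hij
  have hel : i ∈ ell T j := List.take_subset _ _ hij
  have hidx : List.idxOf i (ell T j) < min (Dmax T x) (T j).card :=
    (mem_take_iff_indexOf hel).mp hij
  rw [key_eq_of_mem hdisj (mem_ell.mp hel)]
  have hjm : j.val < n + m := by have := j.isLt; omega
  have h1 : List.idxOf i (ell T j) * (n + m) + j.val
      < (List.idxOf i (ell T j) + 1) * (n + m) := by
    rw [add_mul, one_mul]
    omega
  have h2 : (List.idxOf i (ell T j) + 1) * (n + m) ≤ Dmax T x * (n + m) := by
    apply Nat.mul_le_mul_right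
    omega
  omega

lemma key_ge_of_not_target (hdisj : ∀ j k, j ≠ k → Disjoint (T j) (T k))
    {x : Fin n → Bool} {i : Fin n} (hi : i ∉ target T x) :
    Dmax T x * (n + m) ≤ keyf T i := by
  by_cases hex : ∃ j, i ∈ T j
  · obtain ⟨j, hij⟩ := hex
    rw [key_eq_of_mem hdisj hij]
    have hel : i ∈ ell T j := mem_ell.mpr hij
    have hidxlen : List.idxOf i (ell T j) < (T j).card := by
      rw [← length_ell T j]
      exact List.idxOf_lt_length_iff.mpr hel
    have hge : min (Dmax T x) (T j).card ≤ List.idxOf i (ell T j) := by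
      by_contra hlt
      push_neg at hlt
      exact hi (Finset.mem_biUnion.mpr ⟨j, Finset.mem_univ j,
        List.mem_toFinset.mpr ((mem_take_iff_indexOf hel).mpr hlt)⟩)
    have hD : Dmax T x ≤ List.idxOf i (ell T j) := by omega
    calc Dmax T x * (n + m) ≤ List.idxOf i (ell T j) * (n + m) :=
          Nat.mul_le_mul_right _ hD
      _ ≤ _ := Nat.le_add_right _ _
  · rw [keyf, dif_neg hex]
    calc Dmax T x * (n + m) ≤ n * (n + m) :=
          Nat.mul_le_mul_right _ (Dmax_le_n x)
      _ ≤ _ := Nat.le_add_right _ _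

lemma target_subset_prefix (hdisj : ∀ j k, j ≠ k → Disjoint (T j) (T k))
    (x : Fin n → Bool) :
    target T x ⊆ prefixSet n (sortPerm T) (Kval T x) := by
  intro i hi
  set π := sortPerm T with hπ
  have mono : Monotone (keyf T ∘ π) := Tuple.monotone_sort (keyf T)
  have cmp : ∀ i' , i' ∉ target T x → π.symm i < π.symm i' := by
    intro i' hi'
    by_contra hle
    push_neg at hle
    have h1 : keyf T (π (π.symm i')) ≤ keyf T (π (π.symm i)) := mono hle
    rw [Equiv.apply_symm_apply, Equiv.apply_symm_apply] at h1
    have h2 := key_lt_of_target hdisj hi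
    have h3 := key_ge_of_not_target hdisj hi'
    omega
  refine Finset.mem_filter.mpr ⟨Finset.mem_univ i, ?_⟩
  by_contra hK
  push_neg at hK
  set a := π.symm i with ha
  have hmaps : ∀ w : Fin n, w ∈ Finset.Iic a → π w ∈ target T x := by
    intro w hw
    rw [Finset.mem_Iic] at hw
    by_contra hnt
    have := cmp (π w) hnt
    rw [Equiv.symm_apply_apply] at this
    exact absurd hw (not_le.mpr this)
  have hcard : (Finset.Iic a).card ≤ (target T x).card :=
    Finset.card_le_card_of_injOn (fun w => π w) hmaps
      (fun u _ v _ huv => π.injective huv)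
  rw [Fin.card_Iic, card_target hdisj x] at hcard
  omega

lemma naCost_le_Kval (hdisj : ∀ j k, j ≠ k → Disjoint (T j) (T k))
    {f : (Fin n → Bool) → Bool} (hf : IsReadOnceDNF n m T f) (x : Fin n → Bool) :
    naCost n f (fun _ => 1) (sortPerm T) x ≤ (Kval T x : ℝ) := by
  have hmem : Kval T x ∈ {k : ℕ | Determines n f (prefixSet n (sortPerm T) k) x} := by
    intro x' hx'
    exact det_target hf x x' fun i hi => hx' i (target_subset_prefix hdisj x hi)
  have hsteps : naSteps n f (sortPerm T) x ≤ Kval T x := Nat.sInf_le hmem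
  have hcardle : ∀ k : ℕ, (prefixSet n (sortPerm T) k).card ≤ k := by
    intro k
    have := Finset.card_le_card_of_injOn (fun i => ((sortPerm T).symm i).val)
      (s := prefixSet n (sortPerm T) k) (t := Finset.range k)
      (fun i hi => Finset.mem_range.mpr (Finset.mem_filter.mp hi).2)
      (fun u _ v _ huv => (sortPerm T).symm.injective (Fin.val_injective huv))
    simpa using this
  rw [naCost, Finset.sum_const, nsmul_eq_mul, mul_one]
  have : (prefixSet n (sortPerm T) (naSteps n f (sortPerm T) x)).card ≤ Kval T x :=
    le_trans (hcardle _) hsteps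
  exact_mod_cast this

end Construction

end SBFE

namespace SBFE

lemma ite_nonneg' {c : Prop} [Decidable c] {a : ℝ} (ha : 0 ≤ a) :
    0 ≤ if c then a else 0 := by
  split
  · exact ha
  · exact le_refl 0

section Bounds

variable {n m : ℕ} {T : Fin m → Finset (Fin n)} {f : (Fin n → Bool) → Bool}

lemma one_le_logb (hn : 2 ≤ n) : 1 ≤ Real.logb 2 n := by
  have hn0 : (0:ℝ) < n := by
    have : (2:ℝ) ≤ n := by exact_mod_cast hn
    linarith
  rw [Real.le_logb_iff_rpow_le (by norm_num) hn0, Real.rpow_one]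
  exact_mod_cast hn

lemma card3 (hn : 2 ≤ n) (hlong : ∀ j, 2 * Real.logb 2 n < ((T j).card : ℝ))
    (j : Fin m) : 3 ≤ (T j).card := by
  have hL := one_le_logb hn
  have h1 : (2:ℝ) < ((T j).card : ℝ) := lt_of_le_of_lt (by linarith) (hlong j)
  have : 2 < (T j).card := by exact_mod_cast h1
  omega

lemma three_m_le (hdisj : ∀ j k, j ≠ k → Disjoint (T j) (T k))
    (hcard3 : ∀ j, 3 ≤ (T j).card) : 3 * m ≤ n := by
  have h1 : ∑ j : Fin m, (T j).card = (Finset.univ.biUnion T).card :=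
    (Finset.card_biUnion (fun a _ b _ hab => hdisj a b hab)).symm
  have h2 : (Finset.univ.biUnion T).card ≤ n := by
    simpa using Finset.card_le_card (Finset.subset_univ (Finset.univ.biUnion T))
  have h3 : 3 * m ≤ ∑ j : Fin m, (T j).card := by
    calc 3 * m = ∑ _j : Fin m, 3 := by simp [mul_comm]
      _ ≤ _ := Finset.sum_le_sum (fun j _ => hcard3 j)
  omega

lemma halfpow_card_le (hn : 2 ≤ n)
    (hlong : ∀ j, 2 * Real.logb 2 n < ((T j).card : ℝ)) (j : Fin m) :
    ((1:ℝ)/2)^(T j).card ≤ 1/(n:ℝ)^2 := by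
  have hn0 : (0:ℝ) < n := by
    have : (2:ℝ) ≤ n := by exact_mod_cast hn
    linarith
  have h1 : ((n:ℝ))^2 < 2^((T j).card) := by
    have h2 : (2:ℝ)^(2*Real.logb 2 n) < (2:ℝ)^(((T j).card : ℕ):ℝ) :=
      (Real.rpow_lt_rpow_left_iff (by norm_num)).mpr (hlong j)
    rw [Real.rpow_natCast] at h2
    have h3 : (2:ℝ)^(2*Real.logb 2 n) = (n:ℝ)^2 := by
      rw [mul_comm, Real.rpow_mul (by norm_num), Real.rpow_logb (by norm_num) (by norm_num) hn0]
      rw [show ((2:ℝ):ℝ) = ((2:ℕ):ℝ) by norm_num, Real.rpow_natCast]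
    rw [← h3]
    exact h2
  rw [div_pow, one_pow]
  exact one_div_le_one_div_of_le (by positivity) (le_of_lt h1)

lemma pr_true_le_sum (hf : IsReadOnceDNF n m T f) :
    ∑ x : Fin n → Bool, (if f x = true then ((1:ℝ)/2)^n else 0)
      ≤ ∑ j : Fin m, ((1:ℝ)/2)^(T j).card := by
  have pt : ∀ x : Fin n → Bool, (if f x = true then ((1:ℝ)/2)^n else 0)
      ≤ ∑ j : Fin m, (if ∀ i ∈ T j, x i = true then ((1:ℝ)/2)^n else 0) := by
    intro x
    by_cases hx : f x = true
    · obtain ⟨j0, hj0⟩ := (hf.2.2 x).mp hx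
      rw [if_pos hx]
      refine le_trans (le_of_eq (if_pos hj0).symm) (Finset.single_le_sum
        (f := fun j => if ∀ i ∈ T j, x i = true then ((1:ℝ)/2)^n else 0)
        (fun j _ => ite_nonneg' (by positivity)) (Finset.mem_univ j0))
    · rw [if_neg hx]
      exact Finset.sum_nonneg fun j _ => ite_nonneg' (by positivity)
  calc ∑ x : Fin n → Bool, (if f x = true then ((1:ℝ)/2)^n else 0)
      ≤ ∑ x : Fin n → Bool, ∑ j : Fin m,
          (if ∀ i ∈ T j, x i = true then ((1:ℝ)/2)^n else 0) :=
        Finset.sum_le_sum (fun x _ => pt x)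
    _ = ∑ j : Fin m, ∑ x : Fin n → Bool,
          (if ∀ i ∈ T j, x i = true then ((1:ℝ)/2)^n else 0) := Finset.sum_comm
    _ = ∑ j : Fin m, ((1:ℝ)/2)^(T j).card :=
        Finset.sum_congr rfl (fun j _ => sum_ind_allones n (T j))

lemma pr_true_le_half (hn : 2 ≤ n) (hf : IsReadOnceDNF n m T f)
    (hlong : ∀ j, 2 * Real.logb 2 n < ((T j).card : ℝ)) :
    ∑ x : Fin n → Bool, (if f x = true then ((1:ℝ)/2)^n else 0) ≤ 1/2 := by
  have h1 := pr_true_le_sum hf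
  have h2 : ∑ j : Fin m, ((1:ℝ)/2)^(T j).card ≤ (m:ℝ) * (1/(n:ℝ)^2) := by
    calc ∑ j : Fin m, ((1:ℝ)/2)^(T j).card ≤ ∑ _j : Fin m, 1/(n:ℝ)^2 :=
          Finset.sum_le_sum (fun j _ => halfpow_card_le hn hlong j)
      _ = (m:ℝ) * (1/(n:ℝ)^2) := by simp [mul_comm]
  have h3m : 3 * m ≤ n := three_m_le hf.2.1 (fun j => card3 hn hlong j)
  have h3m' : 3 * (m:ℝ) ≤ (n:ℝ) := by exact_mod_cast h3m
  have hn' : (2:ℝ) ≤ (n:ℝ) := by exact_mod_cast hn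
  have hn0 : (0:ℝ) < n := by linarith
  have h4 : (m:ℝ) * (1/(n:ℝ)^2) ≤ 1/2 := by
    rw [mul_one_div, div_le_div_iff₀ (by positivity) (by norm_num)]
    nlinarith
  linarith

lemma adExp_ge_half_m (hn : 2 ≤ n) (hf : IsReadOnceDNF n m T f)
    (hlong : ∀ j, 2 * Real.logb 2 n < ((T j).card : ℝ))
    (t : DecTree n) (ht : DecTree.Computes t f) :
    (m:ℝ)/2 ≤ adExpCost n (fun _ => 1) (fun _ => 1/2) t := by
  have hcost : ∀ x : Fin n → Bool, f x = false → (m:ℝ) ≤ t.costOn (fun _ => 1) x := by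
    intro x hx
    have hwit : ∀ j : Fin m, ∃ i, i ∈ pathSet t x ∧ i ∈ T j := by
      intro j
      by_contra hc
      push_neg at hc
      set x' : Fin n → Bool := fun i => if i ∈ T j then true else x i with hx'def
      have hagree : ∀ i ∈ pathSet t x, x' i = x i := by
        intro i hi
        by_cases hij : i ∈ T j
        · exact absurd hij (hc i hi)
        · simp [hx'def, hij]
      have h1 : t.eval x' = t.eval x := eval_agree t x x' hagree
      have h2 : f x' = true := (hf.2.2 x').mpr ⟨j, fun i hi => by simp [hx'def, hi]⟩
      rw [ht x', ht x, hx, h2] at h1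
      simp at h1
    choose w hw1 hw2 using hwit
    have hinj : Set.InjOn w (Finset.univ : Finset (Fin m)) := by
      intro a _ b _ hab
      by_contra hne
      exact Finset.disjoint_left.mp (hf.2.1 a b hne) (hw2 a) (hab ▸ hw2 b)
    have hcard : m ≤ (pathSet t x).card := by
      have h := Finset.card_le_card_of_injOn w (fun a _ => hw1 a) hinj
      simpa using h
    calc (m:ℝ) ≤ ((pathSet t x).card : ℝ) := by exact_mod_cast hcard
      _ ≤ _ := card_pathSet_le_costOn t x
  have step1 : ∑ x : Fin n → Bool, (if f x = false then ((1:ℝ)/2)^n * (m:ℝ) else 0)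
      ≤ adExpCost n (fun _ => 1) (fun _ => 1/2) t := by
    rw [adExpCost]
    apply Finset.sum_le_sum
    intro x _
    rw [prodWeight_half]
    by_cases hx : f x = false
    · rw [if_pos hx]
      exact mul_le_mul_of_nonneg_left (hcost x hx) (by positivity)
    · rw [if_neg hx]
      exact mul_nonneg (by positivity) (costOn_nonneg t x)
  have step2 : ∑ x : Fin n → Bool, (if f x = false then ((1:ℝ)/2)^n * (m:ℝ) else 0)
      = (m:ℝ) * (1 - ∑ x : Fin n → Bool, (if f x = true then ((1:ℝ)/2)^n else 0)) := by
    have hpt : ∀ x : Fin n → Bool, (if f x = false then ((1:ℝ)/2)^n * (m:ℝ) else 0)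
        = (m:ℝ) * (((1:ℝ)/2)^n - (if f x = true then ((1:ℝ)/2)^n else 0)) := by
      intro x
      by_cases hx : f x = false
      · rw [if_pos hx, if_neg (by simp [hx])]
        ring
      · rw [if_neg hx, if_pos (by revert hx; cases f x <;> simp)]
        ring
    rw [Finset.sum_congr rfl (fun x _ => hpt x), ← Finset.mul_sum,
      Finset.sum_sub_distrib, sum_weight_one]
  have hpr := pr_true_le_half hn hf hlong
  have hm0 : (0:ℝ) ≤ (m:ℝ) := by positivity
  have : (m:ℝ)/2 ≤ (m:ℝ) * (1 - ∑ x : Fin n → Bool,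
      (if f x = true then ((1:ℝ)/2)^n else 0)) := by
    nlinarith
  linarith

lemma naExp_le_main (hn : 2 ≤ n) (hf : IsReadOnceDNF n m T f)
    (hlong : ∀ j, 2 * Real.logb 2 n < ((T j).card : ℝ)) :
    naExpCost n f (fun _ => 1) (fun _ => 1/2) (sortPerm T) ≤ 3 * m * Real.logb 2 n := by
  set L := Real.logb 2 n with hLdef
  have hL1 : 1 ≤ L := one_le_logb hn
  have hdisj := hf.2.1
  set T₀ := Nat.clog 2 n with hT₀def
  have stepA : naExpCost n f (fun _ => 1) (fun _ => 1/2) (sortPerm T)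
      ≤ (m:ℝ) * ∑ x : Fin n → Bool, ((1:ℝ)/2)^n * (Dmax T x : ℝ) := by
    rw [naExpCost, Finset.mul_sum]
    apply Finset.sum_le_sum
    intro x _
    rw [prodWeight_half]
    have h1 : naCost n f (fun _ => 1) (sortPerm T) x ≤ (Kval T x : ℝ) :=
      naCost_le_Kval hdisj hf x
    have h2 : (Kval T x : ℝ) ≤ (m:ℝ) * (Dmax T x : ℝ) := by
      have h3 : Kval T x ≤ m * Dmax T x := by
        rw [Kval]
        calc ∑ j : Fin m, min (Dmax T x) (T j).card
            ≤ ∑ _j : Fin m, Dmax T x := Finset.sum_le_sum (fun j _ => min_le_left _ _)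
          _ = m * Dmax T x := by simp [mul_comm]
      exact_mod_cast h3
    calc ((1:ℝ)/2)^n * naCost n f (fun _ => 1) (sortPerm T) x
        ≤ ((1:ℝ)/2)^n * (Kval T x : ℝ) :=
          mul_le_mul_of_nonneg_left h1 (by positivity)
      _ ≤ ((1:ℝ)/2)^n * ((m:ℝ) * (Dmax T x : ℝ)) :=
          mul_le_mul_of_nonneg_left h2 (by positivity)
      _ = (m:ℝ) * (((1:ℝ)/2)^n * (Dmax T x : ℝ)) := by ring
  set P : ℕ → ℝ := fun t => ∑ x : Fin n → Bool,
    ((1:ℝ)/2)^n * (if t < Dmax T x then (1:ℝ) else 0) with hPdef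
  have stepB : ∑ x : Fin n → Bool, ((1:ℝ)/2)^n * (Dmax T x : ℝ)
      = ∑ t ∈ Finset.range n, P t := by
    have hx : ∀ x : Fin n → Bool, (Dmax T x : ℝ)
        = ∑ t ∈ Finset.range n, (if t < Dmax T x then (1:ℝ) else 0) := by
      intro x
      rw [Finset.sum_boole]
      have hfe : Finset.filter (fun t => t < Dmax T x) (Finset.range n)
          = Finset.range (Dmax T x) := by
        ext t
        simp only [Finset.mem_filter, Finset.mem_range]
        have := Dmax_le_n (T := T) x
        omega
      rw [hfe, Finset.card_range]
    calc ∑ x : Fin n → Bool, ((1:ℝ)/2)^n * (Dmax T x : ℝ)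
        = ∑ x : Fin n → Bool, ∑ t ∈ Finset.range n,
            ((1:ℝ)/2)^n * (if t < Dmax T x then (1:ℝ) else 0) := by
          refine Finset.sum_congr rfl fun x _ => ?_
          rw [hx x, Finset.mul_sum]
      _ = ∑ t ∈ Finset.range n, P t := Finset.sum_comm
  have hP1 : ∀ t, P t ≤ 1 := by
    intro t
    rw [hPdef]
    calc ∑ x : Fin n → Bool, ((1:ℝ)/2)^n * (if t < Dmax T x then (1:ℝ) else 0)
        ≤ ∑ _x : Fin n → Bool, ((1:ℝ)/2)^n := by
          apply Finset.sum_le_sum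
          intro x _
          by_cases h : t < Dmax T x <;> simp [h] <;> positivity
      _ = 1 := sum_weight_one n
  have hPm : ∀ t, P t ≤ (m:ℝ) * ((1:ℝ)/2)^t := by
    intro t
    have pt : ∀ x : Fin n → Bool, ((1:ℝ)/2)^n * (if t < Dmax T x then (1:ℝ) else 0)
        ≤ ∑ j : Fin m, (if t < (T j).card ∧
            (∀ i ∈ ((ell T j).take t).toFinset, x i = true)
            then ((1:ℝ)/2)^n else 0) := by
      intro x
      by_cases hx : t < Dmax T x
      · rw [if_pos hx, mul_one]
        obtain ⟨j0, _, hj0⟩ := Finset.lt_sup_iff.mp hx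
        have hcond : t < (T j0).card ∧
            ∀ i ∈ ((ell T j0).take t).toFinset, x i = true := by
          constructor
          · exact lt_of_lt_of_le hj0 (dep_le_card (T := T) x j0)
          · intro i hi
            refine sat_of_mem_take (p := fun i => x i) (l := ell T j0) (t := t)
              ?_ (List.mem_toFinset.mp hi)
            have hj0' : t < min ((((ell T j0).takeWhile (fun i => x i)).length) + 1)
                (T j0).card := hj0
            omega
        calc ((1:ℝ)/2)^n
            = (if t < (T j0).card ∧
                (∀ i ∈ ((ell T j0).take t).toFinset, x i = true)
                then ((1:ℝ)/2)^n else 0) := (if_pos hcond).symm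
          _ ≤ _ := Finset.single_le_sum
              (f := fun j => if t < (T j).card ∧
                (∀ i ∈ ((ell T j).take t).toFinset, x i = true)
                then ((1:ℝ)/2)^n else 0)
              (fun j _ => ite_nonneg' (by positivity)) (Finset.mem_univ j0)
      · rw [if_neg hx, mul_zero]
        exact Finset.sum_nonneg fun j _ => ite_nonneg' (by positivity)
    calc P t ≤ ∑ x : Fin n → Bool, ∑ j : Fin m,
          (if t < (T j).card ∧ (∀ i ∈ ((ell T j).take t).toFinset, x i = true)
            then ((1:ℝ)/2)^n else 0) := Finset.sum_le_sum fun x _ => pt x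
      _ = ∑ j : Fin m, ∑ x : Fin n → Bool,
          (if t < (T j).card ∧ (∀ i ∈ ((ell T j).take t).toFinset, x i = true)
            then ((1:ℝ)/2)^n else 0) := Finset.sum_comm
      _ ≤ ∑ _j : Fin m, ((1:ℝ)/2)^t := by
          apply Finset.sum_le_sum
          intro j _
          by_cases hc : t < (T j).card
          · have hcS : (((ell T j).take t).toFinset).card = t := by
              rw [List.toFinset_card_of_nodup
                ((List.take_sublist _ _).nodup (nodup_ell T j)),
                List.length_take, length_ell]
              omega
            have he : ∑ x : Fin n → Bool,
                (if t < (T j).card ∧ (∀ i ∈ ((ell T j).take t).toFinset, x i = true)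
                  then ((1:ℝ)/2)^n else 0)
                = ∑ x : Fin n → Bool,
                (if (∀ i ∈ ((ell T j).take t).toFinset, x i = true)
                  then ((1:ℝ)/2)^n else 0) := by
              refine Finset.sum_congr rfl fun x _ => ?_
              simp only [hc, true_and]
            rw [he, sum_ind_allones n _, hcS]
          · have he : ∀ x : Fin n → Bool,
                (if t < (T j).card ∧ (∀ i ∈ ((ell T j).take t).toFinset, x i = true)
                  then ((1:ℝ)/2)^n else 0) = 0 := by
              intro x
              rw [if_neg]
              intro hcc
              exact hc hcc.1
            rw [Finset.sum_congr rfl fun x _ => he x, Finset.sum_const_zero]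
            positivity
      _ = (m:ℝ) * ((1:ℝ)/2)^t := by simp [mul_comm]
  have stepE : ∑ t ∈ Finset.range n, P t ≤ (T₀:ℝ) + (m:ℝ) * 2 * ((1:ℝ)/2)^T₀ := by
    have hsplit : ∑ t ∈ Finset.range n, P t
        ≤ ∑ t ∈ Finset.range n, (if t < T₀ then (1:ℝ) else (m:ℝ)*((1:ℝ)/2)^t) := by
      apply Finset.sum_le_sum
      intro t _
      by_cases h : t < T₀
      · rw [if_pos h]; exact hP1 t
      · rw [if_neg h]; exact hPm t
    have hite : ∑ t ∈ Finset.range n, (if t < T₀ then (1:ℝ) else (m:ℝ)*((1:ℝ)/2)^t)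
        = (∑ t ∈ (Finset.range n).filter (fun t => t < T₀), (1:ℝ))
          + ∑ t ∈ (Finset.range n).filter (fun t => ¬ t < T₀), (m:ℝ)*((1:ℝ)/2)^t :=
      Finset.sum_ite _ _
    have hsum1 : ∑ t ∈ (Finset.range n).filter (fun t => t < T₀), (1:ℝ) ≤ (T₀:ℝ) := by
      rw [Finset.sum_const, nsmul_eq_mul, mul_one]
      have hsub : (Finset.range n).filter (fun t => t < T₀) ⊆ Finset.range T₀ := by
        intro t htm
        simp only [Finset.mem_filter, Finset.mem_range] at htm ⊢
        omega
      exact_mod_cast Nat.cast_le.mpr ((Finset.card_le_card hsub).trans_eq (Finset.card_range T₀))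
    have hfil : (Finset.range n).filter (fun t => ¬ t < T₀) = Finset.Ico T₀ n := by
      ext t
      simp only [Finset.mem_filter, Finset.mem_range, Finset.mem_Ico]
      omega
    have hsum2 : ∑ t ∈ Finset.Ico T₀ n, (m:ℝ)*((1:ℝ)/2)^t
        ≤ (m:ℝ) * 2 * ((1:ℝ)/2)^T₀ := by
      rw [Finset.sum_Ico_eq_sum_range]
      have hterm : ∀ i : ℕ, (m:ℝ)*((1:ℝ)/2)^(T₀ + i)
          = (m:ℝ)*((1:ℝ)/2)^T₀ * ((1:ℝ)/2)^i := by
        intro i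
        rw [pow_add]
        ring
      rw [Finset.sum_congr rfl (fun i _ => hterm i), ← Finset.mul_sum]
      have hg := sum_geometric_two_le (n - T₀)
      have h0 : (0:ℝ) ≤ (m:ℝ)*((1:ℝ)/2)^T₀ := by positivity
      calc (m:ℝ)*((1:ℝ)/2)^T₀ * (∑ i ∈ Finset.range (n - T₀), ((1:ℝ)/2)^i)
          ≤ (m:ℝ)*((1:ℝ)/2)^T₀ * 2 := by
            apply mul_le_mul_of_nonneg_left _ h0
            simpa using hg
        _ = (m:ℝ) * 2 * ((1:ℝ)/2)^T₀ := by ring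
    rw [hfil] at hite
    calc ∑ t ∈ Finset.range n, P t
        ≤ _ := hsplit
      _ = _ := hite
      _ ≤ (T₀:ℝ) + (m:ℝ) * 2 * ((1:ℝ)/2)^T₀ := add_le_add hsum1 hsum2
  have hpow : ((1:ℝ)/2)^T₀ ≤ 1/(n:ℝ) := by
    have h1 : n ≤ 2^T₀ := Nat.le_pow_clog (by norm_num) n
    have h2 : (n:ℝ) ≤ 2^T₀ := by exact_mod_cast h1
    have hn0 : (0:ℝ) < n := by
      have : (2:ℝ) ≤ n := by exact_mod_cast hn
      linarith
    rw [div_pow, one_pow]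
    exact one_div_le_one_div_of_le hn0 h2
  have hT₀L : (T₀:ℝ) ≤ L + 1 := by
    have hT₀1 : 1 ≤ T₀ := Nat.clog_pos (by norm_num) hn
    have h1 : 2^(T₀-1) < n := Nat.pow_pred_clog_lt_self (by norm_num) (by omega)
    have h2 : ((2:ℝ))^(T₀-1:ℕ) < (n:ℝ) := by exact_mod_cast h1
    have h3 : ((T₀-1:ℕ):ℝ) < L := by
      have h4 := Real.logb_lt_logb (b := 2) (by norm_num)
        (x := ((2:ℝ))^(T₀-1:ℕ)) (by positivity) h2
      rw [Real.logb_pow, Real.logb_self_eq_one (by norm_num)] at h4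
      simpa using h4
    have h5 : ((T₀-1:ℕ):ℝ) = (T₀:ℝ) - 1 := by
      rw [Nat.cast_sub hT₀1]
      simp
    linarith
  have hm23 : (m:ℝ) * 2 * ((1:ℝ)/2)^T₀ ≤ 2/3 := by
    have h3m : 3 * m ≤ n := three_m_le hdisj (fun j => card3 hn hlong j)
    have h3m' : 3 * (m:ℝ) ≤ (n:ℝ) := by exact_mod_cast h3m
    have hn0 : (0:ℝ) < n := by
      have : (2:ℝ) ≤ n := by exact_mod_cast hn
      linarith
    calc (m:ℝ) * 2 * ((1:ℝ)/2)^T₀ ≤ (m:ℝ) * 2 * (1/(n:ℝ)) :=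
          mul_le_mul_of_nonneg_left hpow (by positivity)
      _ ≤ 2/3 := by
          rw [mul_one_div, div_le_div_iff₀ hn0 (by norm_num)]
          nlinarith
  have hSD : ∑ t ∈ Finset.range n, P t ≤ 3 * L := by
    calc ∑ t ∈ Finset.range n, P t ≤ (T₀:ℝ) + (m:ℝ) * 2 * ((1:ℝ)/2)^T₀ := stepE
      _ ≤ (L + 1) + 2/3 := add_le_add hT₀L hm23
      _ ≤ 3 * L := by linarith
  calc naExpCost n f (fun _ => 1) (fun _ => 1/2) (sortPerm T)
      ≤ (m:ℝ) * ∑ x : Fin n → Bool, ((1:ℝ)/2)^n * (Dmax T x : ℝ) := stepA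
    _ = (m:ℝ) * ∑ t ∈ Finset.range n, P t := by rw [stepB]
    _ ≤ (m:ℝ) * (3 * L) := mul_le_mul_of_nonneg_left hSD (by positivity)
    _ = 3 * m * L := by ring

end Bounds

end SBFE

/-- Let `n ≥ 2` and let `f` be a monotone read-once DNF with `m` terms, each containing
more than `2·log₂ n` variables. Under unit costs and the uniform distribution:
(i) there is a non-adaptive strategy with expected cost at most `3·m·log₂ n`;
(ii) `OPT_A(f) ≥ m/2`; consequently `OPT_N(f) ≤ 6·log₂ n · OPT_A(f)`. -/
theorem stmt17 (n : ℕ) (hn : 2 ≤ n) (m : ℕ)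
    (T : Fin m → Finset (Fin n)) (f : (Fin n → Bool) → Bool)
    (hf : IsReadOnceDNF n m T f)
    (hlong : ∀ j, 2 * Real.logb 2 n < ((T j).card : ℝ)) :
    (∃ π : Equiv.Perm (Fin n),
        naExpCost n f (fun _ => 1) (fun _ => 1/2) π ≤ 3 * m * Real.logb 2 n) ∧
    (m : ℝ) / 2 ≤ OPTA n f (fun _ => 1) (fun _ => 1/2) ∧
    OPTN n f (fun _ => 1) (fun _ => 1/2) ≤
      6 * Real.logb 2 n * OPTA n f (fun _ => 1) (fun _ => 1/2) := by
  have hL1 : 1 ≤ Real.logb 2 n := SBFE.one_le_logb hn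
  have hi : naExpCost n f (fun _ => 1) (fun _ => 1/2) (SBFE.sortPerm T)
      ≤ 3 * m * Real.logb 2 n := SBFE.naExp_le_main hn hf hlong
  have hset_ne : { r : ℝ | ∃ t : DecTree n, DecTree.Computes t f ∧
      r = adExpCost n (fun _ => 1) (fun _ => 1/2) t }.Nonempty :=
    ⟨adExpCost n (fun _ => 1) (fun _ => 1/2) (SBFE.treeOfFun (List.finRange n) f),
      SBFE.treeOfFun (List.finRange n) f, SBFE.treeOfFun_computes f, rfl⟩
  have hii : (m:ℝ)/2 ≤ OPTA n f (fun _ => 1) (fun _ => 1/2) := by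
    apply le_csInf hset_ne
    rintro r ⟨t, ht, rfl⟩
    exact SBFE.adExp_ge_half_m hn hf hlong t ht
  refine ⟨⟨SBFE.sortPerm T, hi⟩, hii, ?_⟩
  have hbdd : BddBelow { r : ℝ | ∃ π : Equiv.Perm (Fin n),
      r = naExpCost n f (fun _ => 1) (fun _ => 1/2) π } := by
    refine ⟨0, ?_⟩
    rintro r ⟨π, rfl⟩
    unfold naExpCost
    apply Finset.sum_nonneg
    intro x _
    apply mul_nonneg
    · rw [SBFE.prodWeight_half]
      positivity
    · unfold naCost
      exact Finset.sum_nonneg fun i _ => by norm_num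
  have hOPTN_le : OPTN n f (fun _ => 1) (fun _ => 1/2)
      ≤ naExpCost n f (fun _ => 1) (fun _ => 1/2) (SBFE.sortPerm T) :=
    csInf_le hbdd ⟨SBFE.sortPerm T, rfl⟩
  calc OPTN n f (fun _ => 1) (fun _ => 1/2)
      ≤ 3 * m * Real.logb 2 n := le_trans hOPTN_le hi
    _ = 6 * Real.logb 2 n * ((m:ℝ)/2) := by ring
    _ ≤ 6 * Real.logb 2 n * OPTA n f (fun _ => 1) (fun _ => 1/2) :=
        mul_le_mul_of_nonneg_left hii (by linarith)
end
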